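/- arXiv:1004.4010 — 3 statements merged into one kernel-verified Lean document; each statement's English description precedes it below -/
import Mathlib

section
/- Let D be a class in standard form, i.e. D = dH − Σ_{i=1}^r m_iE_i with d ≥ m_1 ≥ m_2 ≥ … ≥ m_r ≥ 0 and (n−1)d ≥ m_1 + … + m_{n+1}. Then ⟨D, w(E_j)⟩ ≥ 0 for every element w of the group W and every index j ∈ {1, …, r}. (This is Theorem 4.4: a class in standard form has non-negative intersection with w(E) for every (−1)-class E and every w ∈ W, the (−1)-classes being exactly the W-orbit of the E_j's.) -/
open BigOperators Finset

/-- The lattice `L = ℤ^{1+r}`: coordinates with respect to the basis `H, E₁, …, E_r`. -/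
abbrev PicL (r : ℕ) := Fin (r + 1) → ℤ

/-- `cls r d m` is the class `d·H - ∑ᵢ mᵢ·Eᵢ`. -/
def cls (r : ℕ) (d : ℤ) (m : Fin r → ℤ) : PicL r :=
  Fin.cases d (fun i => -(m i))

/-- The bilinear form determined by `⟨H,H⟩ = n-1`, `⟨Eᵢ,Eᵢ⟩ = -1`,
`⟨H,Eᵢ⟩ = ⟨Eᵢ,E_j⟩ = 0` for `i ≠ j`. -/
def bil (n r : ℕ) (x y : PicL r) : ℤ :=
  ((n : ℤ) - 1) * x 0 * y 0 - ∑ i : Fin r, x i.succ * y i.succ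

/-- The exceptional class `E_j`. -/
def Ecl (r : ℕ) (j : Fin r) : PicL r := cls r 0 (fun i => if i = j then -1 else 0)

/-- `F = H - E₁ - ⋯ - E_{n+1}`. -/
def Fcl (n r : ℕ) : PicL r := cls r 1 (fun i => if (i : ℕ) < n + 1 then 1 else 0)

/-- `F_k = E_k - E_{k+1}` (zero-based index `k`). -/
def Fdiff (r k : ℕ) : PicL r :=
  cls r 0 (fun i => if (i : ℕ) = k then -1 else if (i : ℕ) = k + 1 then 1 else 0)

/-- The reflection `σ_R(D) = D + ⟨D,R⟩·R`. -/
def reflect (n r : ℕ) (R D : PicL r) : PicL r := D + bil n r D R • R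

namespace T44

/-! coordinates -/

lemma cls_zero (r : ℕ) (d : ℤ) (m : Fin r → ℤ) : cls r d m 0 = d := rfl

lemma cls_succ (r : ℕ) (d : ℤ) (m : Fin r → ℤ) (i : Fin r) : cls r d m i.succ = -(m i) := by
  simp [cls]

/-! bilinearity -/

lemma bil_add_left (n r : ℕ) (x y z : PicL r) :
    bil n r (x + y) z = bil n r x z + bil n r y z := by
  simp only [bil, Pi.add_apply, add_mul, mul_add, Finset.sum_add_distrib]
  ring

lemma bil_smul_left (n r : ℕ) (c : ℤ) (x z : PicL r) :
    bil n r (c • x) z = c * bil n r x z := by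
  simp only [bil, Pi.smul_apply, smul_eq_mul]
  rw [mul_sub, Finset.mul_sum]
  congr 1
  · ring
  · exact Finset.sum_congr rfl (fun i _ => by ring)

lemma bil_symm (n r : ℕ) (x y : PicL r) : bil n r x y = bil n r y x := by
  unfold bil
  congr 1
  · ring
  · exact Finset.sum_congr rfl (fun i _ => mul_comm _ _)

lemma bil_add_right (n r : ℕ) (x y z : PicL r) :
    bil n r x (y + z) = bil n r x y + bil n r x z := by
  rw [bil_symm, bil_add_left, bil_symm n r y x, bil_symm n r z x]

lemma bil_smul_right (n r : ℕ) (c : ℤ) (x z : PicL r) :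
    bil n r x (c • z) = c * bil n r x z := by
  rw [bil_symm, bil_smul_left, bil_symm]

lemma bil_reflect_left (n r : ℕ) (R D T : PicL r) :
    bil n r (reflect n r R D) T = bil n r D T + bil n r D R * bil n r R T := by
  rw [reflect, bil_add_left, bil_smul_left]

/-! concrete values -/

lemma sum_ite_eq_range {M : Type*} [AddCommMonoid M] (r k : ℕ) (hk : k < r) (f : ℕ → M) :
    (∑ i ∈ range r, if i = k then f i else 0) = f k := by
  rw [Finset.sum_ite_eq' (range r) k f]
  simp [hk]

lemma bil_Fcl_Fcl (n r : ℕ) (hr : n + 1 ≤ r) : bil n r (Fcl n r) (Fcl n r) = -2 := by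
  unfold bil Fcl
  simp only [cls_zero, cls_succ, mul_one, neg_mul_neg]
  rw [Fin.sum_univ_eq_sum_range (fun k => (if k < n+1 then (1:ℤ) else 0) * (if k < n+1 then (1:ℤ) else 0)) r]
  have h2 : ∀ i, ((if i < n+1 then (1:ℤ) else 0) * (if i < n+1 then (1:ℤ) else 0))
      = (if i ∈ range (n+1) then (1:ℤ) else 0) := by
    intro i; by_cases hi : i < n + 1 <;> simp [hi]
  simp only [h2]
  rw [Finset.sum_ite_mem, Finset.inter_eq_right.mpr (Finset.range_subset_range.mpr hr)]
  simp
  ring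

lemma sum_two_ind (r k1 k2 : ℕ) (h1 : k1 < r) (h2 : k2 < r) (a b : ℤ) (hk : k1 ≠ k2) :
    ∑ i ∈ range r, ((if i = k1 then a else 0) + (if i = k2 then b else 0)) = a + b := by
  rw [Finset.sum_add_distrib, sum_ite_eq_range r k1 h1 (fun _ => a),
    sum_ite_eq_range r k2 h2 (fun _ => b)]

lemma bil_Fdiff_Fdiff_self (n r k : ℕ) (hk : k + 1 < r) :
    bil n r (Fdiff r k) (Fdiff r k) = -2 := by
  unfold bil Fdiff
  simp only [cls_zero, cls_succ, mul_zero, zero_mul, mul_one, neg_neg]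
  rw [Fin.sum_univ_eq_sum_range (fun i => (-(if i = k then (-1:ℤ) else if i = k+1 then 1 else 0)) *
      (-(if i = k then (-1:ℤ) else if i = k+1 then 1 else 0))) r]
  have hpt : ∀ i, (-(if i = k then (-1:ℤ) else if i = k+1 then 1 else 0)) *
      (-(if i = k then (-1:ℤ) else if i = k+1 then 1 else 0))
      = ((if i = k then (1:ℤ) else 0) + (if i = k+1 then 1 else 0)) := by
    intro i; split_ifs <;> omega
  simp only [hpt]
  rw [sum_two_ind r k (k+1) (by omega) hk 1 1 (by omega)]
  ring

lemma bil_Fcl_Fdiff (n r k : ℕ) (hk : k + 1 < r) :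
    bil n r (Fcl n r) (Fdiff r k) = if k = n then 1 else 0 := by
  unfold bil Fcl Fdiff
  simp only [cls_zero, cls_succ, mul_zero, mul_one]
  rw [Fin.sum_univ_eq_sum_range (fun i => (-(if i < n+1 then (1:ℤ) else 0)) *
      (-(if i = k then (-1:ℤ) else if i = k+1 then 1 else 0))) r]
  have hpt : ∀ i, (-(if i < n+1 then (1:ℤ) else 0)) *
      (-(if i = k then (-1:ℤ) else if i = k+1 then 1 else 0))
      = ((if i = k then (if k < n+1 then (-1:ℤ) else 0) else 0) +
         (if i = k+1 then (if k+1 < n+1 then (1:ℤ) else 0) else 0)) := by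
    intro i; split_ifs <;> omega
  simp only [hpt]
  rw [sum_two_ind r k (k+1) (by omega) hk _ _ (by omega)]
  split_ifs <;> omega

lemma bil_Fdiff_Fdiff (n r k k' : ℕ) (hk : k + 1 < r) (hk' : k' + 1 < r) (hne : k ≠ k') :
    bil n r (Fdiff r k) (Fdiff r k')
      = (if k = k' + 1 then 1 else 0) + (if k' = k + 1 then 1 else 0) := by
  unfold bil Fdiff
  simp only [cls_zero, cls_succ, mul_zero, zero_mul]
  rw [Fin.sum_univ_eq_sum_range (fun i => (-(if i = k then (-1:ℤ) else if i = k+1 then 1 else 0)) *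
      (-(if i = k' then (-1:ℤ) else if i = k'+1 then 1 else 0))) r]
  have hpt : ∀ i, (-(if i = k then (-1:ℤ) else if i = k+1 then 1 else 0)) *
      (-(if i = k' then (-1:ℤ) else if i = k'+1 then 1 else 0))
      = ((if i = k then (if k = k'+1 then (-1:ℤ) else 0) else 0) +
         (if i = k+1 then (if k' = k+1 then (-1:ℤ) else 0) else 0)) := by
    intro i; split_ifs <;> omega
  simp only [hpt]
  rw [sum_two_ind r k (k+1) (by omega) hk _ _ (by omega)]
  split_ifs <;> omega

lemma bil_Ecl_Fcl (n r : ℕ) (j : Fin r) :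
    bil n r (Ecl r j) (Fcl n r) = if (j : ℕ) < n + 1 then 1 else 0 := by
  unfold bil Ecl Fcl
  simp only [cls_zero, cls_succ, zero_mul, mul_one]
  have hpt : ∀ i : Fin r, (-(if i = j then (-1:ℤ) else 0)) * (-(if (i:ℕ) < n+1 then (1:ℤ) else 0))
      = if i = j then -(if (i:ℕ) < n+1 then (1:ℤ) else 0) else 0 := by
    intro i; split_ifs <;> ring
  simp only [hpt]
  rw [Finset.sum_ite_eq' univ j (fun i => -(if (i:ℕ) < n+1 then (1:ℤ) else 0))]
  simp

lemma bil_Ecl_Fdiff (n r k : ℕ) (j : Fin r) (hk : k + 1 < r) :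
    bil n r (Ecl r j) (Fdiff r k)
      = (if (j:ℕ) = k + 1 then 1 else 0) - (if (j:ℕ) = k then 1 else 0) := by
  unfold bil Ecl Fdiff
  simp only [cls_zero, cls_succ, zero_mul]
  have hpt : ∀ i : Fin r, (-(if i = j then (-1:ℤ) else 0)) *
      (-(if (i:ℕ) = k then (-1:ℤ) else if (i:ℕ) = k+1 then 1 else 0))
      = if i = j then ((if (i:ℕ) = k then (1:ℤ) else 0) - (if (i:ℕ) = k+1 then 1 else 0)) else 0 := by
    intro i; split_ifs <;> omega
  simp only [hpt]
  rw [Finset.sum_ite_eq' univ j (fun i => ((if (i:ℕ) = k then (1:ℤ) else 0) - (if (i:ℕ) = k+1 then 1 else 0)))]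
  simp only [Finset.mem_univ, if_true]
  ring

lemma bil_cls_Ecl (n r : ℕ) (d : ℤ) (m : Fin r → ℤ) (j : Fin r) :
    bil n r (cls r d m) (Ecl r j) = m j := by
  unfold bil Ecl
  simp only [cls_zero, cls_succ, mul_zero, zero_mul]
  have hpt : ∀ i : Fin r, (-(m i)) * (-(if i = j then (-1:ℤ) else 0))
      = if i = j then -(m i) else 0 := by
    intro i; split_ifs <;> ring
  simp only [hpt]
  rw [Finset.sum_ite_eq' univ j (fun i => -(m i))]
  simp

lemma bil_cls_Fcl (n r : ℕ) (d : ℤ) (m : Fin r → ℤ) :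
    bil n r (cls r d m) (Fcl n r)
      = ((n:ℤ) - 1) * d - ∑ i : Fin r, (if (i:ℕ) < n + 1 then m i else 0) := by
  unfold bil Fcl
  simp only [cls_zero, cls_succ, mul_one]
  have hpt : ∀ i : Fin r, (-(m i)) * (-(if (i:ℕ) < n+1 then (1:ℤ) else 0))
      = if (i:ℕ) < n+1 then m i else 0 := by
    intro i; split_ifs <;> ring
  simp only [hpt]

lemma bil_cls_Fdiff (n r k : ℕ) (d : ℤ) (m : Fin r → ℤ) (hk : k + 1 < r) :
    bil n r (cls r d m) (Fdiff r k) = m ⟨k, by omega⟩ - m ⟨k+1, hk⟩ := by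
  unfold bil Fdiff
  simp only [cls_zero, cls_succ, mul_zero, zero_mul]
  have hpt : ∀ i : Fin r, (-(m i)) *
      (-(if (i:ℕ) = k then (-1:ℤ) else if (i:ℕ) = k+1 then 1 else 0))
      = (if i = (⟨k, by omega⟩ : Fin r) then -(m i) else 0) + (if i = (⟨k+1, hk⟩ : Fin r) then m i else 0) := by
    intro i
    by_cases h1 : (i:ℕ) = k
    · have e1 : i = (⟨k, by omega⟩ : Fin r) := Fin.ext h1
      have e2 : ¬ i = (⟨k+1, hk⟩ : Fin r) := by simp [Fin.ext_iff, h1]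
      rw [if_pos h1, if_pos e1, if_neg e2]; ring
    · have e1 : ¬ i = (⟨k, by omega⟩ : Fin r) := by simp [Fin.ext_iff, h1]
      by_cases h2 : (i:ℕ) = k+1
      · have e2 : i = (⟨k+1, hk⟩ : Fin r) := Fin.ext h2
        rw [if_neg h1, if_pos h2, if_neg e1, if_pos e2]; ring
      · have e2 : ¬ i = (⟨k+1, hk⟩ : Fin r) := by simp [Fin.ext_iff, h2]
        rw [if_neg h1, if_neg h2, if_neg e1, if_neg e2]; ring
  simp only [hpt]
  rw [Finset.sum_add_distrib,
    Finset.sum_ite_eq' univ (⟨k, by omega⟩ : Fin r) (fun i => -(m i)),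
    Finset.sum_ite_eq' univ (⟨k+1, hk⟩ : Fin r) (fun i => m i)]
  simp only [Finset.mem_univ, if_true]
  ring

lemma reflect_Fdiff_Ecl (n r k : ℕ) (hk : k + 1 < r) :
    reflect n r (Fdiff r k) (Ecl r ⟨k+1, hk⟩) = Ecl r ⟨k, by omega⟩ := by
  have hb : bil n r (Ecl r ⟨k+1, hk⟩) (Fdiff r k) = 1 := by
    rw [bil_Ecl_Fdiff n r k _ hk]; simp
  rw [reflect, hb, one_smul]
  funext x
  refine Fin.cases ?_ (fun i => ?_) x
  · show Ecl r ⟨k+1, hk⟩ 0 + Fdiff r k 0 = Ecl r ⟨k, by omega⟩ 0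
    simp [Ecl, Fdiff, cls_zero]
  · show Ecl r ⟨k+1, hk⟩ i.succ + Fdiff r k i.succ = Ecl r ⟨k, by omega⟩ i.succ
    unfold Ecl Fdiff
    rw [cls_succ, cls_succ, cls_succ]
    by_cases h1 : (i:ℕ) = k
    · have e1 : i = (⟨k, by omega⟩ : Fin r) := Fin.ext h1
      have e2 : ¬ i = (⟨k+1, hk⟩ : Fin r) := by simp [Fin.ext_iff, h1]
      rw [if_neg e2, if_pos h1, if_pos e1]; ring
    · have e1 : ¬ i = (⟨k, by omega⟩ : Fin r) := by simp [Fin.ext_iff, h1]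
      by_cases h2 : (i:ℕ) = k+1
      · have e2 : i = (⟨k+1, hk⟩ : Fin r) := Fin.ext h2
        rw [if_pos e2, if_neg h1, if_pos h2, if_neg e1]; ring
      · have e2 : ¬ i = (⟨k+1, hk⟩ : Fin r) := by simp [Fin.ext_iff, h2]
        rw [if_neg e2, if_neg h1, if_neg h2, if_neg e1]; ring

/-! ## Reflections as linear endomorphisms -/

def reflL (n r : ℕ) (R : PicL r) : Module.End ℤ (PicL r) where
  toFun := reflect n r R
  map_add' x y := by
    funext i
    simp only [reflect, bil_add_left, Pi.add_apply, Pi.smul_apply, smul_eq_mul]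
    ring
  map_smul' c x := by
    funext i
    simp only [reflect, bil_smul_left, RingHom.id_apply, Pi.add_apply, Pi.smul_apply, smul_eq_mul]
    ring

lemma reflL_apply (n r : ℕ) (R D : PicL r) : reflL n r R D = reflect n r R D := rfl

lemma reflL_sq (n r : ℕ) (R : PicL r) (hR : bil n r R R = -2) :
    reflL n r R * reflL n r R = 1 := by
  apply LinearMap.ext; intro D
  show reflect n r R (reflect n r R D) = D
  have h1 : bil n r (reflect n r R D) R = - bil n r D R := by
    rw [bil_reflect_left, hR]; ring
  rw [reflect, h1]
  funext i
  simp only [reflect, Pi.add_apply, Pi.smul_apply, smul_eq_mul]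
  ring

/-- Simple roots. -/
def SRoot (n r : ℕ) (R : PicL r) : Prop :=
  R = Fcl n r ∨ ∃ k, k + 1 < r ∧ R = Fdiff r k

lemma SRoot_sq (n r : ℕ) (hr : n + 1 ≤ r) (R : PicL r) (hR : SRoot n r R) :
    bil n r R R = -2 := by
  rcases hR with h | ⟨k, hk, h⟩
  · rw [h]; exact bil_Fcl_Fcl n r hr
  · rw [h]; exact bil_Fdiff_Fdiff_self n r k hk

lemma SRoot_pair (n r : ℕ) (hr : n + 1 ≤ r) (R T : PicL r)
    (hR : SRoot n r R) (hT : SRoot n r T) (hne : R ≠ T) :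
    bil n r R T = 0 ∨ bil n r R T = 1 := by
  rcases hR with h1 | ⟨k, hk, h1⟩ <;> rcases hT with h2 | ⟨k', hk', h2⟩
  · exact absurd (h1.trans h2.symm) hne
  · rw [h1, h2, bil_Fcl_Fdiff n r k' hk']
    split_ifs <;> simp
  · rw [h1, h2, bil_symm, bil_Fcl_Fdiff n r k hk]
    split_ifs <;> simp
  · have hkk : k ≠ k' := by
      intro h; exact hne (by rw [h1, h2, h])
    rw [h1, h2, bil_Fdiff_Fdiff n r k k' hk hk' hkk]
    rcases Nat.lt_trichotomy k k' with h | h | h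
    · split_ifs <;> omega
    · omega
    · split_ifs <;> omega

lemma comm_rel (n r : ℕ) (R T : PicL r) (hRT : bil n r R T = 0) (hTR : bil n r T R = 0) :
    reflL n r R * reflL n r T = reflL n r T * reflL n r R := by
  apply LinearMap.ext; intro D
  show reflect n r R (reflect n r T D) = reflect n r T (reflect n r R D)
  simp only [reflect, bil_add_left, bil_smul_left, hRT, hTR]
  funext i
  simp only [Pi.add_apply, Pi.smul_apply, smul_eq_mul]
  ring

lemma braid_rel (n r : ℕ) (R T : PicL r) (hRR : bil n r R R = -2) (hTT : bil n r T T = -2)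
    (hRT : bil n r R T = 1) (hTR : bil n r T R = 1) :
    reflL n r R * reflL n r T * reflL n r R = reflL n r T * reflL n r R * reflL n r T := by
  apply LinearMap.ext; intro D
  show reflect n r R (reflect n r T (reflect n r R D)) =
       reflect n r T (reflect n r R (reflect n r T D))
  simp only [reflect, bil_add_left, bil_smul_left, hRT, hTR, hRR, hTT]
  funext i
  simp only [Pi.add_apply, Pi.smul_apply, smul_eq_mul]
  ring

lemma reflect_root_sum (n r : ℕ) (R T : PicL r) (hRR : bil n r R R = -2)
    (hTR : bil n r T R = 1) :
    reflL n r R (R + T) = T := by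
  show reflect n r R (R + T) = T
  have h : bil n r (R + T) R = -1 := by rw [bil_add_left, hRR, hTR]; ring
  rw [reflect, h]
  funext i
  simp only [Pi.add_apply, Pi.smul_apply, smul_eq_mul]
  ring

/-! ## Words -/

def SList (n r : ℕ) (l : List (PicL r)) : Prop := ∀ R ∈ l, SRoot n r R

def prodL (n r : ℕ) (l : List (PicL r)) : Module.End ℤ (PicL r) :=
  (l.map (reflL n r)).prod

lemma prodL_nil (n r : ℕ) : prodL n r [] = 1 := rfl

lemma prodL_cons (n r : ℕ) (R : PicL r) (l : List (PicL r)) :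
    prodL n r (R :: l) = reflL n r R * prodL n r l := by
  simp [prodL]

lemma prodL_append (n r : ℕ) (l l' : List (PicL r)) :
    prodL n r (l ++ l') = prodL n r l * prodL n r l' := by
  simp [prodL]

lemma prodL_inv (n r : ℕ) (hr : n + 1 ≤ r) (l : List (PicL r)) (hl : SList n r l) :
    prodL n r l * prodL n r l.reverse = 1 := by
  induction l with
  | nil => simp [prodL]
  | cons R l ih =>
    have hR : SRoot n r R := hl R (List.mem_cons_self)
    have hl' : SList n r l := fun T hT => hl T (List.mem_cons_of_mem R hT)
    rw [List.reverse_cons, prodL_cons, prodL_append, ← mul_assoc, mul_assoc (reflL n r R)]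
    rw [ih hl']
    have : prodL n r [R] = reflL n r R := by simp [prodL]
    rw [mul_one, this, reflL_sq n r R (SRoot_sq n r hr R hR)]

def IsWord (n r : ℕ) (f : Module.End ℤ (PicL r)) : Prop :=
  ∃ l, SList n r l ∧ f = prodL n r l

lemma IsWord.one (n r : ℕ) : IsWord n r 1 :=
  ⟨[], ⟨fun R h => absurd h List.not_mem_nil, rfl⟩⟩

lemma IsWord.mul {n r : ℕ} {f g : Module.End ℤ (PicL r)} (hf : IsWord n r f)
    (hg : IsWord n r g) : IsWord n r (f * g) := by
  obtain ⟨l, hl, rfl⟩ := hf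
  obtain ⟨l', hl', rfl⟩ := hg
  exact ⟨l ++ l', fun R h => ((List.mem_append.mp h).elim (hl R) (hl' R)),
    (prodL_append n r l l').symm⟩

lemma IsWord.refl {n r : ℕ} {R : PicL r} (hR : SRoot n r R) : IsWord n r (reflL n r R) :=
  ⟨[R], ⟨fun T hT => (List.mem_singleton.mp hT) ▸ hR, by simp [prodL]⟩⟩

/-! ## Length -/

noncomputable def wlen (n r : ℕ) (f : Module.End ℤ (PicL r)) : ℕ :=
  sInf {L | ∃ l, List.length l = L ∧ SList n r l ∧ f = prodL n r l}

lemma wlen_le {n r : ℕ} {f : Module.End ℤ (PicL r)} {l : List (PicL r)}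
    (hl : SList n r l) (hf : f = prodL n r l) : wlen n r f ≤ l.length :=
  Nat.sInf_le ⟨l, rfl, hl, hf⟩

lemma wlen_spec {n r : ℕ} {f : Module.End ℤ (PicL r)} (hf : IsWord n r f) :
    ∃ l, List.length l = wlen n r f ∧ SList n r l ∧ f = prodL n r l := by
  obtain ⟨l, hl, rfl⟩ := hf
  have hne : {L | ∃ l', List.length l' = L ∧ SList n r l' ∧ prodL n r l = prodL n r l'}.Nonempty :=
    ⟨l.length, l, rfl, hl, rfl⟩
  exact Nat.sInf_mem hne

lemma wlen_zero_eq_one {n r : ℕ} {f : Module.End ℤ (PicL r)} (hf : IsWord n r f)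
    (h0 : wlen n r f = 0) : f = 1 := by
  obtain ⟨l, hlen, _, hf'⟩ := wlen_spec hf
  rw [h0, List.length_eq_zero_iff] at hlen
  rw [hf', hlen, prodL_nil]

lemma wlen_mul_refl_le {n r : ℕ} {f : Module.End ℤ (PicL r)} {R : PicL r}
    (hf : IsWord n r f) (hR : SRoot n r R) :
    wlen n r (f * reflL n r R) ≤ wlen n r f + 1 := by
  obtain ⟨l, hlen, hl, hf'⟩ := wlen_spec hf
  have : f * reflL n r R = prodL n r (l ++ [R]) := by
    rw [prodL_append, hf']; simp [prodL]
  calc wlen n r (f * reflL n r R) ≤ (l ++ [R]).length :=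
        wlen_le (fun T hT => ((List.mem_append.mp hT).elim (hl T)
          (fun h => (List.mem_singleton.mp h) ▸ hR))) this
    _ = wlen n r f + 1 := by simp [hlen]

/-! ## Determinant and parity -/

lemma det_reflL (n r : ℕ) (hr : n + 1 ≤ r) (R : PicL r) (hR : SRoot n r R) :
    LinearMap.det (reflL n r R) = -1 := by
  have hRR : bil n r R R = -2 := SRoot_sq n r hr R hR
  rw [← LinearMap.det_toMatrix' (reflL n r R)]
  have hM : LinearMap.toMatrix' (reflL n r R)
      = 1 + Matrix.replicateCol Unit R *
          Matrix.replicateRow Unit (fun j => bil n r (fun j' => if j' = j then 1 else 0) R) := by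
    ext i j
    rw [LinearMap.toMatrix'_apply]
    rw [show (Pi.single j (1:ℤ) : PicL r) = fun j' => if j' = j then 1 else 0 by
      ext j'; simp [Pi.single_apply]]
    show reflect n r R (fun j' => if j' = j then 1 else 0) i = _
    rw [reflect]
    simp only [Matrix.add_apply, Matrix.one_apply, Matrix.mul_apply, Matrix.replicateCol_apply,
      Matrix.replicateRow_apply, Finset.univ_unique, Finset.sum_singleton, Pi.add_apply,
      Pi.smul_apply, smul_eq_mul]
    ring
  rw [hM, Matrix.det_one_add_replicateCol_mul_replicateRow]
  have hd : dotProduct (fun j => bil n r (fun j' => if j' = j then 1 else 0) R) R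
      = bil n r R R := by
    unfold dotProduct
    rw [Fin.sum_univ_succ]
    have h0 : bil n r (fun j' => if j' = 0 then (1:ℤ) else 0) R = ((n:ℤ)-1) * R 0 := by
      unfold bil
      have hz : ∀ i : Fin r, (if i.succ = (0 : Fin (r+1)) then (1:ℤ) else 0) * R i.succ = 0 := by
        intro i
        rw [if_neg (Fin.succ_ne_zero i)]
        ring
      simp only [hz, Finset.sum_const_zero, if_pos rfl]
      norm_num
    have hs : ∀ i : Fin r, bil n r (fun j' => if j' = i.succ then (1:ℤ) else 0) R = -(R i.succ) := by
      intro i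
      unfold bil
      have hz : (if (0 : Fin (r+1)) = i.succ then (1:ℤ) else 0) = 0 :=
        if_neg (Fin.succ_ne_zero i).symm
      have hpt : ∀ i' : Fin r, (if i'.succ = i.succ then (1:ℤ) else 0) * R i'.succ
          = if i' = i then R i'.succ else 0 := by
        intro i'
        by_cases h : i' = i
        · subst h; simp
        · rw [if_neg h, if_neg (fun hc => h (Fin.succ_injective r hc))]
          ring
      simp only [hpt, hz, Finset.sum_ite_eq' univ i (fun i' => R i'.succ)]
      simp
    simp only []
    show bil n r (fun j' => if j' = 0 then (1:ℤ) else 0) R * R 0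
        + (∑ i : Fin r, bil n r (fun j' => if j' = i.succ then (1:ℤ) else 0) R * R i.succ)
        = bil n r R R
    rw [h0]
    simp only [hs]
    unfold bil
    have : ∑ x : Fin r, -R x.succ * R x.succ = -∑ i : Fin r, R i.succ * R i.succ := by
      rw [← Finset.sum_neg_distrib]
      exact Finset.sum_congr rfl (fun i _ => by ring)
    rw [this]
    ring
  rw [hd, hRR]
  norm_num

lemma det_prodL (n r : ℕ) (hr : n + 1 ≤ r) (l : List (PicL r)) (hl : SList n r l) :
    LinearMap.det (prodL n r l) = (-1) ^ l.length := by
  induction l with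
  | nil => simp [prodL]
  | cons R l ih =>
    rw [prodL_cons, map_mul, det_reflL n r hr R (hl R (List.mem_cons_self)),
      ih (fun T hT => hl T (List.mem_cons_of_mem R hT))]
    rw [List.length_cons, pow_succ]
    ring

lemma wlen_parity {n r : ℕ} (hr : n + 1 ≤ r) {f : Module.End ℤ (PicL r)} (hf : IsWord n r f) :
    LinearMap.det f = (-1) ^ (wlen n r f) := by
  obtain ⟨l, hlen, hl, hf'⟩ := wlen_spec hf
  have h := det_prodL n r hr l hl
  rw [← hf'] at h
  rw [h, hlen]

lemma wlen_ne {n r : ℕ} (hr : n + 1 ≤ r) {f : Module.End ℤ (PicL r)} {R : PicL r}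
    (hf : IsWord n r f) (hR : SRoot n r R) :
    wlen n r (f * reflL n r R) ≠ wlen n r f := by
  intro h
  have h1 : LinearMap.det (f * reflL n r R) = (-1) ^ wlen n r (f * reflL n r R) :=
    wlen_parity hr (hf.mul (IsWord.refl hR))
  have h2 : LinearMap.det (f * reflL n r R) = - LinearMap.det f := by
    rw [map_mul, det_reflL n r hr R hR]; ring
  rw [wlen_parity hr hf] at h2
  rw [h] at h1
  have h3 : (-1 : ℤ) ^ wlen n r f ≠ 0 := pow_ne_zero _ (by norm_num)
  have h4 := h1.symm.trans h2
  have h5 : (2 : ℤ) * (-1) ^ wlen n r f = 0 := by linarith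
  rcases mul_eq_zero.mp h5 with h6 | h6
  · norm_num at h6
  · exact h3 h6

/-! ## Peeling the last letter -/

lemma wlen_peel {n r : ℕ} (hr : n + 1 ≤ r) {f : Module.End ℤ (PicL r)} {L : ℕ}
    (hf : IsWord n r f) (hL : wlen n r f = L + 1) :
    ∃ g T, SRoot n r T ∧ IsWord n r g ∧ wlen n r g = L ∧ f = g * reflL n r T := by
  obtain ⟨l, hlen, hl, hf'⟩ := wlen_spec hf
  rcases l.eq_nil_or_concat with rfl | ⟨l', T, rfl⟩
  · rw [hL] at hlen; simp at hlen
  · have hT : SRoot n r T := hl T (by simp)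
    have hl' : SList n r l' := fun S hS => hl S (by simp [hS])
    have hg : f = prodL n r l' * reflL n r T := by
      rw [hf', List.concat_eq_append, prodL_append]; simp [prodL]
    have hlen' : l'.length = L := by
      have := hlen; rw [hL] at this; simpa using this
    refine ⟨prodL n r l', T, hT, ⟨l', hl', rfl⟩, ?_, hg⟩
    have h1 : wlen n r (prodL n r l') ≤ L := hlen' ▸ wlen_le hl' rfl
    rcases Nat.lt_or_ge (wlen n r (prodL n r l')) L with h2 | h2
    · exfalso
      have h3 : wlen n r f ≤ wlen n r (prodL n r l') + 1 := hg ▸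
        wlen_mul_refl_le ⟨l', hl', rfl⟩ hT
      omega
    · omega

/-! ## The positive cone -/

def InCone (n r : ℕ) (x : PicL r) : Prop :=
  ∃ (a : ℤ) (c : ℕ → ℤ), 0 ≤ a ∧ (∀ k, 0 ≤ c k) ∧
    x = a • Fcl n r + ∑ k ∈ range (r - 1), c k • Fdiff r k

lemma InCone.zero (n r : ℕ) : InCone n r 0 :=
  ⟨0, fun _ => 0, le_refl _, fun _ => le_refl _, by simp⟩

lemma InCone.add {n r : ℕ} {x y : PicL r} (hx : InCone n r x) (hy : InCone n r y) :
    InCone n r (x + y) := by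
  obtain ⟨a, c, ha, hc, rfl⟩ := hx
  obtain ⟨a', c', ha', hc', rfl⟩ := hy
  refine ⟨a + a', fun k => c k + c' k, add_nonneg ha ha', fun k => add_nonneg (hc k) (hc' k), ?_⟩
  rw [add_smul]
  have : ∑ k ∈ range (r-1), (c k + c' k) • Fdiff r k
      = (∑ k ∈ range (r-1), c k • Fdiff r k) + ∑ k ∈ range (r-1), c' k • Fdiff r k := by
    rw [← Finset.sum_add_distrib]
    exact Finset.sum_congr rfl (fun k _ => add_smul _ _ _)
  rw [this]
  abel

lemma InCone.smul {n r : ℕ} {x : PicL r} (e : ℤ) (he : 0 ≤ e) (hx : InCone n r x) :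
    InCone n r (e • x) := by
  obtain ⟨a, c, ha, hc, rfl⟩ := hx
  refine ⟨e * a, fun k => e * c k, mul_nonneg he ha, fun k => mul_nonneg he (hc k), ?_⟩
  rw [smul_add, smul_smul, Finset.smul_sum]
  congr 1
  exact Finset.sum_congr rfl (fun k _ => (smul_smul e (c k) _))

lemma InCone.root {n r : ℕ} {R : PicL r} (hR : SRoot n r R) : InCone n r R := by
  rcases hR with h | ⟨k, hk, h⟩
  · exact ⟨1, fun _ => 0, by norm_num, fun _ => le_refl _, by simp [h]⟩
  · refine ⟨0, fun k' => if k' = k then 1 else 0, le_refl _,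
      fun k' => by simp only []; split_ifs <;> norm_num, ?_⟩
    rw [h, zero_smul, zero_add]
    have : ∀ k' ∈ range (r-1), (if k' = k then (1:ℤ) else 0) • Fdiff r k'
        = if k' = k then Fdiff r k' else 0 := by
      intro k' _; split_ifs <;> simp
    rw [Finset.sum_congr rfl this, Finset.sum_ite_eq' (range (r-1)) k (fun k' => Fdiff r k')]
    rw [if_pos (Finset.mem_range.mpr (by omega))]

/-! ## Sign coherence -/

theorem cone_of_incr {n r : ℕ} (hr : n + 1 ≤ r) :
    ∀ L (f : Module.End ℤ (PicL r)), IsWord n r f → wlen n r f = L →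
    ∀ R, SRoot n r R → wlen n r f < wlen n r (f * reflL n r R) → InCone n r (f R) := by
  intro L
  induction L using Nat.strong_induction_on with
  | _ L IH =>
    intro f hf hL R hR hincr
    match L, hL with
    | 0, hL =>
      have h1 : f = 1 := wlen_zero_eq_one hf hL
      rw [h1]
      show InCone n r R
      exact InCone.root hR
    | (K + 1), hL =>
      obtain ⟨g, T, hT, hg, hgK, hfg⟩ := wlen_peel hr hf hL
      have hTT : bil n r T T = -2 := SRoot_sq n r hr T hT
      have hRR : bil n r R R = -2 := SRoot_sq n r hr R hR
      by_cases hTR : T = R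
      · exfalso
        have hinv : f * reflL n r R = g := by
          rw [hfg, hTR, mul_assoc, reflL_sq n r R hRR, mul_one]
        rw [hinv, hL, hgK] at hincr
        omega
      · have hfR : f R = g (reflL n r T R) := by
          rw [hfg]; rfl
        have hsTR : reflL n r T R = R + bil n r R T • T := rfl
        have hgT : InCone n r (g T) := by
          refine IH K (by omega) g hg hgK T hT ?_
          rw [hgK, ← hfg, hL]
          omega
        rcases SRoot_pair n r hr R T hR hT (fun h => hTR h.symm) with hc | hc
        · -- commuting case
          rcases Nat.lt_or_ge (wlen n r g) (wlen n r (g * reflL n r R)) with h1 | h1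
          · have hgR : InCone n r (g R) := IH K (by omega) g hg hgK R hR h1
            have : f R = g R := by
              rw [hfR, hsTR, hc, zero_smul, add_zero]
            rw [this]; exact hgR
          · exfalso
            have hne := wlen_ne hr hg hR
            have h2 : wlen n r (g * reflL n r R) < K := by omega
            have hcomm : f * reflL n r R = (g * reflL n r R) * reflL n r T := by
              rw [hfg, mul_assoc g, mul_assoc g,
                comm_rel n r T R ((bil_symm n r T R).trans hc) hc]
            have h5 : wlen n r (f * reflL n r R) ≤ wlen n r (g * reflL n r R) + 1 := by
              rw [hcomm]; exact wlen_mul_refl_le (hg.mul (IsWord.refl hR)) hT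
            omega
        · -- braid case
          have hcs : bil n r T R = 1 := (bil_symm n r T R).trans hc
          rcases Nat.lt_or_ge (wlen n r g) (wlen n r (g * reflL n r R)) with h1 | h1
          · have hgR : InCone n r (g R) := IH K (by omega) g hg hgK R hR h1
            have : f R = g R + g T := by
              rw [hfR, hsTR, hc, one_smul, map_add]
            rw [this]; exact hgR.add hgT
          · have hne := wlen_ne hr hg hR
            have h2 : wlen n r (g * reflL n r R) < K := by omega
            set u := g * reflL n r R with hu
            have hgu : g = u * reflL n r R := by
              rw [hu, mul_assoc, reflL_sq n r R hRR, mul_one]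
            have huw : IsWord n r u := hg.mul (IsWord.refl hR)
            have huK : wlen n r u < K := h2
            have hincr_u : wlen n r u < wlen n r (u * reflL n r T) := by
              by_contra h3
              push_neg at h3
              have hne2 := wlen_ne hr huw hT
              have h4 : wlen n r (u * reflL n r T) < wlen n r u := by omega
              have hbr : f * reflL n r R = ((u * reflL n r T) * reflL n r R) * reflL n r T := by
                rw [hfg, hgu]
                calc u * reflL n r R * reflL n r T * reflL n r R
                    = u * (reflL n r R * reflL n r T * reflL n r R) := by
                      rw [mul_assoc u, mul_assoc u, mul_assoc (reflL n r R)]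
                  _ = u * (reflL n r T * reflL n r R * reflL n r T) := by
                      rw [braid_rel n r R T hRR hTT hc hcs]
                  _ = ((u * reflL n r T) * reflL n r R) * reflL n r T := by
                      rw [mul_assoc u, mul_assoc u, mul_assoc (reflL n r T)]
              have s1 : wlen n r ((u * reflL n r T) * reflL n r R)
                  ≤ wlen n r (u * reflL n r T) + 1 :=
                wlen_mul_refl_le (huw.mul (IsWord.refl hT)) hR
              have s2 : wlen n r (f * reflL n r R)
                  ≤ wlen n r ((u * reflL n r T) * reflL n r R) + 1 := by
                rw [hbr]
                exact wlen_mul_refl_le ((huw.mul (IsWord.refl hT)).mul (IsWord.refl hR)) hT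
              omega
            have huT : InCone n r (u T) :=
              IH (wlen n r u) (by omega) u huw rfl T hT hincr_u
            have : f R = u T := by
              rw [hfR, hsTR, hc, one_smul, hgu]
              show (u * reflL n r R) (R + T) = u T
              rw [Module.End.mul_apply, reflect_root_sum n r R T hRR hcs]
            rw [this]; exact huT

/-! ## Dominance -/

lemma lam_dom {n r : ℕ} (h0 : r - 1 < r) (R : PicL r) (hR : SRoot n r R) :
    0 ≤ bil n r (Ecl r ⟨r - 1, h0⟩) R := by
  rcases hR with h | ⟨k, hk, h⟩
  · rw [h, bil_Ecl_Fcl]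
    split_ifs <;> norm_num
  · rw [h, bil_Ecl_Fdiff n r k _ hk]
    have hkr : ¬ ((⟨r - 1, h0⟩ : Fin r) : ℕ) = k := by simp; omega
    rw [if_neg hkr]
    split_ifs <;> norm_num

theorem dom {n r : ℕ} (hr : n + 1 ≤ r) (h0 : r - 1 < r) :
    ∀ L (f : Module.End ℤ (PicL r)), IsWord n r f → wlen n r f ≤ L →
    ∃ y, InCone n r y ∧ f (Ecl r ⟨r - 1, h0⟩) = Ecl r ⟨r - 1, h0⟩ + y := by
  intro L
  induction L with
  | zero =>
    intro f hf hL
    have h1 : f = 1 := wlen_zero_eq_one hf (Nat.le_zero.mp hL)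
    exact ⟨0, InCone.zero n r, by rw [h1]; simp⟩
  | succ L IH =>
    intro f hf hL
    rcases Nat.lt_or_ge (wlen n r f) (L + 1) with h1 | h1
    · exact IH f hf (by omega)
    · have hKL : wlen n r f = L + 1 := by omega
      obtain ⟨g, T, hT, hg, hgK, hfg⟩ := wlen_peel hr hf hKL
      obtain ⟨y, hy, hgy⟩ := IH g hg (by omega)
      have hgT : InCone n r (g T) := by
        refine cone_of_incr hr (wlen n r g) g hg rfl T hT ?_
        rw [hgK, ← hfg, hKL]
        omega
      set e := bil n r (Ecl r ⟨r - 1, h0⟩) T with he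
      have hepos : 0 ≤ e := lam_dom h0 T hT
      refine ⟨y + e • (g T), hy.add (InCone.smul e hepos hgT), ?_⟩
      have hstep : f (Ecl r ⟨r - 1, h0⟩)
          = g (Ecl r ⟨r - 1, h0⟩) + e • (g T) := by
        rw [hfg, Module.End.mul_apply]
        have : reflL n r T (Ecl r ⟨r - 1, h0⟩) = Ecl r ⟨r - 1, h0⟩ + e • T := rfl
        rw [this, map_add, map_smul]
      rw [hstep, hgy]
      abel

/-! ## Chain from the last exceptional class -/

lemma Echain {n r : ℕ} (hr : n + 1 ≤ r) (h0 : r - 1 < r) (j : Fin r) :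
    ∃ f, IsWord n r f ∧ f (Ecl r ⟨r - 1, h0⟩) = Ecl r j := by
  have key : ∀ t, t < r → ∃ f, IsWord n r f ∧
      f (Ecl r ⟨r - 1, h0⟩) = Ecl r ⟨r - 1 - t, by omega⟩ := by
    intro t
    induction t with
    | zero =>
      intro _
      exact ⟨1, IsWord.one n r, by congr 1⟩
    | succ t IHt =>
      intro ht
      obtain ⟨f, hf, hfl⟩ := IHt (by omega)
      set k := r - 1 - (t + 1) with hk
      have hk1 : k + 1 < r := by omega
      have hkk : r - 1 - t = k + 1 := by omega
      refine ⟨reflL n r (Fdiff r k) * f,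
        (IsWord.refl (Or.inr ⟨k, hk1, rfl⟩)).mul hf, ?_⟩
      rw [Module.End.mul_apply, hfl]
      have h2 : Ecl r ⟨r - 1 - t, by omega⟩ = Ecl r ⟨k + 1, hk1⟩ :=
        congrArg (Ecl r) (Fin.mk_eq_mk.mpr hkk)
      rw [h2]
      show reflect n r (Fdiff r k) (Ecl r ⟨k + 1, hk1⟩) = _
      rw [reflect_Fdiff_Ecl n r k hk1]
  obtain ⟨f, hf, hfl⟩ := key (r - 1 - (j : ℕ)) (by omega)
  refine ⟨f, hf, ?_⟩
  rw [hfl]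
  have hjl := j.isLt
  refine congrArg (Ecl r) (Fin.ext ?_)
  show r - 1 - (r - 1 - (j : ℕ)) = (j : ℕ)
  omega

lemma bil_sum_right {n r : ℕ} (x : PicL r) (s : Finset ℕ) (v : ℕ → PicL r) :
    bil n r x (∑ k ∈ s, v k) = ∑ k ∈ s, bil n r x (v k) := by
  induction s using Finset.cons_induction with
  | empty =>
    simp [bil]
  | cons a s ha ih =>
    rw [Finset.sum_cons, Finset.sum_cons, bil_add_right, ih]

end T44

/-- The Weyl group `W`: subgroup of the `ℤ`-linear automorphisms of `L` generated by
`σ_F` and the `σ_{F_k}`, `1 ≤ k ≤ r-1`. -/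
def Wgrp (n r : ℕ) : Subgroup ((PicL r) ≃ₗ[ℤ] (PicL r)) :=
  Subgroup.closure
    {w | (∀ D, w D = reflect n r (Fcl n r) D) ∨
         ∃ k, k + 1 < r ∧ ∀ D, w D = reflect n r (Fdiff r k) D}

open T44 in
/-- **Theorem 4.4.** A class in standard form has non-negative intersection with `w(E_j)`
for every `w ∈ W` and every exceptional class `E_j`. -/
theorem stmt0 (n r : ℕ) (hn : 2 ≤ n) (hr : n + 1 ≤ r)
    (d : ℤ) (m : Fin r → ℤ)
    (hdm : ∀ i, m i ≤ d) (hmono : Antitone m) (hpos : ∀ i, 0 ≤ m i)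
    (hsum : (∑ i : Fin r, if (i : ℕ) < n + 1 then m i else 0) ≤ ((n : ℤ) - 1) * d)
    (w : (PicL r) ≃ₗ[ℤ] (PicL r)) (hw : w ∈ Wgrp n r) (j : Fin r) :
    0 ≤ bil n r (cls r d m) (w (Ecl r j)) := by
  have h0 : r - 1 < r := by omega
  have hP : ∃ f, IsWord n r f ∧ ∀ D, w D = f D := by
    refine Subgroup.closure_induction ?_ ?_ ?_ ?_ hw
    · rintro x (hx | ⟨k, hk, hx⟩)
      · exact ⟨reflL n r (Fcl n r), IsWord.refl (Or.inl rfl), fun D => hx D⟩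
      · exact ⟨reflL n r (Fdiff r k), IsWord.refl (Or.inr ⟨k, hk, rfl⟩), fun D => hx D⟩
    · exact ⟨1, IsWord.one n r, fun D => rfl⟩
    · rintro x y hx hy ⟨f, hf, hfD⟩ ⟨g, hg, hgD⟩
      refine ⟨f * g, hf.mul hg, fun D => ?_⟩
      show x (y D) = f (g D)
      rw [hgD, hfD]
    · rintro x hx ⟨f, ⟨l, hl, rfl⟩, hfD⟩
      refine ⟨prodL n r l.reverse,
        ⟨l.reverse, fun R hR => hl R (List.mem_reverse.mp hR), rfl⟩, fun D => ?_⟩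
      have hinv : prodL n r l (prodL n r l.reverse D) = D := by
        have h := prodL_inv n r hr l hl
        calc prodL n r l (prodL n r l.reverse D)
            = (prodL n r l * prodL n r l.reverse) D := rfl
          _ = D := by rw [h]; rfl
      have hx1 : x (prodL n r l.reverse D) = D := by rw [hfD, hinv]
      calc x⁻¹ D = x⁻¹ (x (prodL n r l.reverse D)) := by rw [hx1]
        _ = prodL n r l.reverse D := x.symm_apply_apply _
  obtain ⟨f, hfw, hfD⟩ := hP
  obtain ⟨g, hgw, hgl⟩ := Echain hr h0 j
  have hwE : w (Ecl r j) = (f * g) (Ecl r ⟨r - 1, h0⟩) := by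
    rw [hfD, ← hgl]; rfl
  obtain ⟨y, hy, hfy⟩ := dom hr h0 (wlen n r (f * g)) (f * g) (hfw.mul hgw) (le_refl _)
  rw [hwE, hfy]
  obtain ⟨a, c, ha, hc, rfl⟩ := hy
  rw [bil_add_right, bil_add_right, bil_smul_right, bil_sum_right]
  have t1 : 0 ≤ bil n r (cls r d m) (Ecl r ⟨r - 1, h0⟩) := by
    rw [bil_cls_Ecl]; exact hpos _
  have t2 : 0 ≤ bil n r (cls r d m) (Fcl n r) := by
    rw [bil_cls_Fcl]; exact sub_nonneg.mpr hsum
  have t3 : 0 ≤ ∑ k ∈ range (r - 1), bil n r (cls r d m) (c k • Fdiff r k) := by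
    apply Finset.sum_nonneg
    intro k hk
    have hk1 : k + 1 < r := by have := Finset.mem_range.mp hk; omega
    rw [bil_smul_right, bil_cls_Fdiff n r k d m hk1]
    apply mul_nonneg (hc k)
    have hle : (⟨k, by omega⟩ : Fin r) ≤ ⟨k + 1, hk1⟩ := Fin.mk_le_mk.mpr (by omega)
    have := hmono hle
    linarith
  have t4 : 0 ≤ a * bil n r (cls r d m) (Fcl n r) := mul_nonneg ha t2
  linarith
end

section
/- Let n ≥ 2 and r ≥ n+1 be integers, and let d, m_1, …, m_r be integers satisfying d ≥ m_1 ≥ m_2 ≥ … ≥ m_r ≥ 0, (n−1)d² − Σ_{i=1}^r m_i² = −1, and Σ_{i=1}^r m_i = (n+1)d − 1. Then (n−1)d < m_1 + m_2 + … + m_{n+1}. (This is Lemma 4.2: a (−1)-class E with E·F_i ≥ 0 and E·E_i ≥ 0 for all i satisfies E·F < 0.) -/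
open BigOperators Finset

/-- **Lemma 4.2.** A `(-1)`-class `E = dH - ∑ mᵢEᵢ` with decreasing non-negative
multiplicities and `d ≥ m₁` satisfies `E·F < 0`, i.e.
`(n-1)d < m₁ + ⋯ + m_{n+1}`. -/
theorem stmt1 (n r : ℕ) (hn : 2 ≤ n) (hr : n + 1 ≤ r)
    (d : ℤ) (m : Fin r → ℤ)
    (hdm : ∀ i, m i ≤ d) (hmono : Antitone m) (hpos : ∀ i, 0 ≤ m i)
    (hsq : ((n : ℤ) - 1) * d ^ 2 - ∑ i : Fin r, (m i) ^ 2 = -1)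
    (hK : ∑ i : Fin r, m i = ((n : ℤ) + 1) * d - 1) :
    ((n : ℤ) - 1) * d < ∑ i : Fin r, if (i : ℕ) < n + 1 then m i else 0 := by
  have hnr : n < r := by omega
  set a : ℤ := m ⟨n, hnr⟩ with ha
  have ha0 : 0 ≤ a := hpos _
  set t : ℤ := ∑ i : Fin r, if (i : ℕ) < n + 1 then m i else 0 with ht
  -- d ≥ 1
  have hsum0 : (0:ℤ) ≤ ((n:ℤ)+1) * d - 1 := by
    rw [← hK]; exact Finset.sum_nonneg fun i _ => hpos i
  have hn2 : (2:ℤ) ≤ (n:ℤ) := by exact_mod_cast hn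
  have hd1 : 1 ≤ d := by nlinarith
  -- key termwise inequality
  have key : ∑ i : Fin r, m i * (m i - a) ≤
      ∑ i : Fin r, (if (i : ℕ) < n + 1 then d * (m i - a) else 0) := by
    apply Finset.sum_le_sum
    intro i _
    by_cases h : (i : ℕ) < n + 1
    · rw [if_pos h]
      have hia : a ≤ m i := hmono (show i ≤ ⟨n, hnr⟩ from by
        rw [Fin.le_def]; simpa using Nat.lt_succ_iff.mp h)
      exact mul_le_mul_of_nonneg_right (hdm i) (by linarith)
    · rw [if_neg h]
      have hia : m i ≤ a := hmono (show (⟨n, hnr⟩ : Fin r) ≤ i from by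
        rw [Fin.le_def]; simpa using by omega)
      exact mul_nonpos_of_nonneg_of_nonpos (hpos i) (by linarith)
  -- evaluate LHS
  have hL : ∑ i : Fin r, m i * (m i - a) =
      (∑ i : Fin r, (m i)^2) - a * ∑ i : Fin r, m i := by
    rw [Finset.mul_sum, ← Finset.sum_sub_distrib]
    exact Finset.sum_congr rfl fun i _ => by ring
  -- count
  have hcard : ∑ i : Fin r, (if (i : ℕ) < n + 1 then (1:ℤ) else 0) = (n:ℤ) + 1 := by
    rw [Fin.sum_univ_eq_sum_range (fun j => if j < n + 1 then (1:ℤ) else 0) r]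
    rw [← Finset.sum_filter]
    have : Finset.filter (fun j => j < n + 1) (Finset.range r) = Finset.range (n+1) := by
      ext j; simp; omega
    rw [this]
    simp
  -- evaluate RHS
  have hR : ∑ i : Fin r, (if (i : ℕ) < n + 1 then d * (m i - a) else 0) =
      d * t - d * a * ((n:ℤ) + 1) := by
    have : ∀ i : Fin r, (if (i : ℕ) < n + 1 then d * (m i - a) else 0) =
        d * (if (i : ℕ) < n + 1 then m i else 0) -
        d * a * (if (i : ℕ) < n + 1 then (1:ℤ) else 0) := by
      intro i; by_cases h : (i : ℕ) < n + 1 <;> simp [h] <;> ring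
    rw [Finset.sum_congr rfl fun i _ => this i, Finset.sum_sub_distrib,
      ← Finset.mul_sum, ← Finset.mul_sum, ← ht, hcard]
  rw [hL, hR, hK] at key
  have hsq' : ∑ i : Fin r, (m i)^2 = ((n:ℤ) - 1) * d ^ 2 + 1 := by linarith
  rw [hsq'] at key
  -- key : (n-1)d^2 + 1 - a((n+1)d - 1) ≤ d t - d a (n+1)
  nlinarith [key, hd1, ha0]
end

section
/- Let d ≥ m_1 ≥ m_2 ≥ … ≥ m_9 ≥ 0 be integers with 2d ≥ m_1 + m_2 + m_3 + m_4. In the lattice L' = ℤ^{11} (case n = 2, r = 10), let z be the class with degree δ := 2d−m_1 and multiplicity vector the decreasing rearrangement (μ_1 ≥ … ≥ μ_10) of (d−m_1, d−m_1, m_2, m_3, …, m_9). Then either z is in standard form (i.e. δ ≥ μ_1 and δ ≥ μ_1 + μ_2 + μ_3, with μ_10 ≥ 0), or the class σ_{F'}(z) is in standard form after reordering its multiplicities in decreasing order. (The case analysis proved in the Proposition of Section 6.) -/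
open BigOperators Finset

/-- The multiplicity vector `(d-m₁, d-m₁, m₂, …, m₉)` of the restriction `D|_Q`
written in the plane basis of `Pic(Q)` (indices are zero-based). -/
def restMult (d : ℤ) (m : Fin 9 → ℤ) : Fin 10 → ℤ :=
  fun j => if h : (j : ℕ) ≤ 1 then d - m 0
    else m ⟨(j : ℕ) - 1, by have := j.isLt; omega⟩

/-- Standard form for a plane class `δh - ∑ μᵢeᵢ` on the blow-up of `P²` at
`10` points: `δ ≥ μ₁ ≥ ⋯ ≥ μ₁₀ ≥ 0` and `δ ≥ μ₁ + μ₂ + μ₃`. -/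
def Std10 (δ : ℤ) (μ : Fin 10 → ℤ) : Prop :=
  Antitone μ ∧ μ 0 ≤ δ ∧ 0 ≤ μ 9 ∧ μ 0 + μ 1 + μ 2 ≤ δ

private lemma sum2_le {n : ℕ} {g : Fin n → ℤ} {B0 B1 : ℤ} {s : ℕ}
    (h0 : ∀ j : Fin n, s ≤ (j:ℕ) → g j ≤ B0)
    (h1 : ∀ j : Fin n, s+1 ≤ (j:ℕ) → g j ≤ B1)
    {p q : Fin n} (hp : s ≤ (p:ℕ)) (hq : s ≤ (q:ℕ)) (hpq : p ≠ q) :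
    g p + g q ≤ B0 + B1 := by
  have core : ∀ a b : Fin n, s ≤ (a:ℕ) → a < b → g a + g b ≤ B0 + B1 := by
    intro a b ha hab
    have hab' := Fin.lt_def.mp hab
    have hb : s+1 ≤ (b:ℕ) := by omega
    linarith [h0 a ha, h1 b hb]
  rcases hpq.lt_or_gt with h | h
  · exact core p q hp h
  · linarith [core q p hq h]

private lemma sum3_le {n : ℕ} {g : Fin n → ℤ} {B0 B1 B2 : ℤ} {s : ℕ}
    (h0 : ∀ j : Fin n, s ≤ (j:ℕ) → g j ≤ B0)
    (h1 : ∀ j : Fin n, s+1 ≤ (j:ℕ) → g j ≤ B1)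
    (h2 : ∀ j : Fin n, s+2 ≤ (j:ℕ) → g j ≤ B2)
    {p q r : Fin n} (hp : s ≤ (p:ℕ)) (hq : s ≤ (q:ℕ)) (hr : s ≤ (r:ℕ))
    (hpq : p ≠ q) (hpr : p ≠ r) (hqr : q ≠ r) :
    g p + g q + g r ≤ B0 + B1 + B2 := by
  have core : ∀ a b c : Fin n, s ≤ (a:ℕ) → a < b → b < c →
      g a + g b + g c ≤ B0 + B1 + B2 := by
    intro a b c ha hab hbc
    have hab' := Fin.lt_def.mp hab
    have hbc' := Fin.lt_def.mp hbc
    have hb : s+1 ≤ (b:ℕ) := by omega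
    have hc : s+2 ≤ (c:ℕ) := by omega
    linarith [h0 a ha, h1 b hb, h2 c hc]
  rcases hpq.lt_or_gt with h1' | h1' <;> rcases hpr.lt_or_gt with h2' | h2' <;>
    rcases hqr.lt_or_gt with h3' | h3'
  · linarith [core p q r hp h1' h3']
  · linarith [core p r q hp h2' h3']
  · exact absurd ((h2'.trans h1').trans h3') (lt_irrefl r)
  · linarith [core r p q hr h2' h1']
  · linarith [core q p r hq h1' h2']
  · exact absurd ((h2'.trans h3').trans h1') (lt_irrefl p)
  · linarith [core q r p hq h3' h2']
  · linarith [core r q p hr h3' h1']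

private lemma v_cases (d : ℤ) (m : Fin 9 → ℤ) (i : Fin 10) :
    (restMult d m i = d - m 0 ∧ (i:ℕ) ≤ 1) ∨
    ∃ p : Fin 9, restMult d m i = m p ∧ (p:ℕ) + 1 = (i:ℕ) ∧ 1 ≤ (p:ℕ) := by
  by_cases h : (i:ℕ) ≤ 1
  · exact Or.inl ⟨dif_pos h, h⟩
  · exact Or.inr ⟨⟨(i:ℕ) - 1, by have := i.isLt; omega⟩, dif_neg h,
      by simp only [Fin.val_mk]; omega, by simp only [Fin.val_mk]; omega⟩

/-- **Case analysis in the Proposition of Section 6.** Let `z` have degree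
`δ = 2d - m₁` and multiplicities `μ` the decreasing rearrangement of
`(d-m₁, d-m₁, m₂, …, m₉)`. Then either `z` is in standard form, or
`σ_{F'}(z)` is in standard form after reordering its multiplicities in
decreasing order, where `σ_{F'}` sends `(δ; μ₁,…,μ₁₀)` to
`(δ+t; μ₁+t, μ₂+t, μ₃+t, μ₄, …, μ₁₀)` with `t = δ - μ₁ - μ₂ - μ₃`. -/
theorem stmt15 (d : ℤ) (m : Fin 9 → ℤ)
    (hdm : m 0 ≤ d) (hmono : Antitone m) (hpos : ∀ i, 0 ≤ m i)
    (hstd : m 0 + m 1 + m 2 + m 3 ≤ 2 * d)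
    (μ : Fin 10 → ℤ) (τ : Equiv.Perm (Fin 10))
    (hμ : μ = restMult d m ∘ τ) (hμmono : Antitone μ) :
    Std10 (2 * d - m 0) μ ∨
    ∃ τ' : Equiv.Perm (Fin 10),
      Std10 (2 * d - m 0 + (2 * d - m 0 - μ 0 - μ 1 - μ 2))
        ((fun j : Fin 10 => if (j : ℕ) ≤ 2 then μ j + (2 * d - m 0 - μ 0 - μ 1 - μ 2)
            else μ j) ∘ τ') := by
  have hμv : ∀ j, μ j = restMult d m (τ j) := by intro j; rw [hμ]; rfl
  have hvμ : ∀ i, restMult d m i = μ (τ.symm i) := by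
    intro i; rw [hμ]; simp
  have hd0 : 0 ≤ d := le_trans (hpos 0) hdm
  have hm10 : m 1 ≤ m 0 := hmono (by decide)
  have hm21 : m 2 ≤ m 1 := hmono (by decide)
  have hm32 : m 3 ≤ m 2 := hmono (by decide)
  have hml0 : ∀ p : Fin 9, m p ≤ m 0 := fun p => hmono (Fin.zero_le p)
  have c1 : ((1 : Fin 10) : ℕ) = 1 := rfl
  have c2 : ((2 : Fin 10) : ℕ) = 2 := rfl
  have c91 : ((1 : Fin 9) : ℕ) = 1 := rfl
  have c92 : ((2 : Fin 9) : ℕ) = 2 := rfl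
  have c93 : ((3 : Fin 9) : ℕ) = 3 := rfl
  have hml1 : ∀ p : Fin 9, 1 ≤ (p:ℕ) → m p ≤ m 1 :=
    fun p hp => hmono (Fin.le_def.mpr (by rw [c91]; exact hp))
  have hml2 : ∀ p : Fin 9, 2 ≤ (p:ℕ) → m p ≤ m 2 :=
    fun p hp => hmono (Fin.le_def.mpr (by rw [c92]; exact hp))
  have hml3 : ∀ p : Fin 9, 3 ≤ (p:ℕ) → m p ≤ m 3 :=
    fun p hp => hmono (Fin.le_def.mpr (by rw [c93]; exact hp))
  have hμle1 : ∀ j : Fin 10, 1 ≤ (j:ℕ) → μ j ≤ μ 1 :=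
    fun j hj => hμmono (Fin.le_def.mpr (by rw [c1]; exact hj))
  have hμle2 : ∀ j : Fin 10, 2 ≤ (j:ℕ) → μ j ≤ μ 2 :=
    fun j hj => hμmono (Fin.le_def.mpr (by rw [c2]; exact hj))
  have ev0 : restMult d m 0 = d - m 0 := rfl
  have ev2 : restMult d m 2 = m 1 := rfl
  have ev3 : restMult d m 3 = m 2 := rfl
  have ev4 : restMult d m 4 = m 3 := rfl
  have hv_nonneg : ∀ i, 0 ≤ restMult d m i := by
    intro i
    rcases v_cases d m i with ⟨h, _⟩ | ⟨p, h, _, _⟩ <;> rw [h]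
    · linarith
    · exact hpos p
  have hv_le : ∀ i, restMult d m i ≤ 2*d - m 0 := by
    intro i
    rcases v_cases d m i with ⟨h, _⟩ | ⟨p, h, _, _⟩ <;> rw [h]
    · linarith
    · linarith [hml0 p, hpos 0]
  have hμ_nonneg : ∀ j, 0 ≤ μ j := fun j => (hμv j) ▸ hv_nonneg (τ j)
  have hμ_le : ∀ j, μ j ≤ 2*d - m 0 := fun j => (hμv j) ▸ hv_le (τ j)
  have hμ0ge : ∀ i, restMult d m i ≤ μ 0 := fun i => by
    rw [hvμ i]; exact hμmono (Fin.zero_le _)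
  -- distinctness facts
  have hτ01 : τ 0 ≠ τ 1 := fun h => absurd (τ.injective h) (by decide)
  have hτ02 : τ 0 ≠ τ 2 := fun h => absurd (τ.injective h) (by decide)
  have hτ12 : τ 1 ≠ τ 2 := fun h => absurd (τ.injective h) (by decide)
  have hv01 : ((τ 0 : Fin 10) : ℕ) ≠ ((τ 1 : Fin 10) : ℕ) := fun h => hτ01 (Fin.ext h)
  have hv02 : ((τ 0 : Fin 10) : ℕ) ≠ ((τ 2 : Fin 10) : ℕ) := fun h => hτ02 (Fin.ext h)
  have hv12 : ((τ 1 : Fin 10) : ℕ) ≠ ((τ 2 : Fin 10) : ℕ) := fun h => hτ12 (Fin.ext h)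
  have hμ3 : ∀ p q r : Fin 10, p ≠ q → p ≠ r → q ≠ r →
      μ p + μ q + μ r ≤ μ 0 + μ 1 + μ 2 := by
    intro p q r hpq hpr hqr
    exact sum3_le (s := 0) (fun j _ => hμmono (Fin.zero_le j)) (fun j hj => hμle1 j hj)
      (fun j hj => hμle2 j hj) (Nat.zero_le _) (Nat.zero_le _) (Nat.zero_le _) hpq hpr hqr
  have hsymm_ne : ∀ {a b : Fin 10}, a ≠ b → τ.symm a ≠ τ.symm b :=
    fun h hh => h (τ.symm.injective hh)
  have hSlb : (d - m 0) + m 1 + m 2 ≤ μ 0 + μ 1 + μ 2 := by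
    have h := hμ3 (τ.symm 0) (τ.symm 2) (τ.symm 3)
      (hsymm_ne (by decide)) (hsymm_ne (by decide)) (hsymm_ne (by decide))
    rw [← hvμ 0, ← hvμ 2, ← hvμ 3, ev0, ev2, ev3] at h
    exact h
  have hSub : μ 0 + μ 1 + μ 2 ≤ 2*d - m 0 ∨
      μ 0 + μ 1 + μ 2 ≤ (d - m 0) + m 1 + m 2 := by
    rw [hμv 0, hμv 1, hμv 2]
    rcases v_cases d m (τ 0) with ⟨f0, g0⟩ | ⟨p0, f0, g0, k0⟩ <;>
      rcases v_cases d m (τ 1) with ⟨f1, g1⟩ | ⟨p1, f1, g1, k1⟩ <;>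
      rcases v_cases d m (τ 2) with ⟨f2, g2⟩ | ⟨p2, f2, g2, k2⟩ <;>
      rw [f0, f1, f2]
    · exfalso; omega
    · left; linarith [hml0 p2]
    · left; linarith [hml0 p1]
    · right
      have hne : p1 ≠ p2 := fun h => hv12 (by have := congrArg Fin.val h; omega)
      have := sum2_le (s := 1) hml1 hml2 k1 k2 hne
      linarith
    · left; linarith [hml0 p0]
    · right
      have hne : p0 ≠ p2 := fun h => hv02 (by have := congrArg Fin.val h; omega)
      have := sum2_le (s := 1) hml1 hml2 k0 k2 hne
      linarith
    · right
      have hne : p0 ≠ p1 := fun h => hv01 (by have := congrArg Fin.val h; omega)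
      have := sum2_le (s := 1) hml1 hml2 k0 k1 hne
      linarith
    · left
      have hne01 : p0 ≠ p1 := fun h => hv01 (by have := congrArg Fin.val h; omega)
      have hne02 : p0 ≠ p2 := fun h => hv02 (by have := congrArg Fin.val h; omega)
      have hne12 : p1 ≠ p2 := fun h => hv12 (by have := congrArg Fin.val h; omega)
      have := sum3_le (s := 1) hml1 hml2 hml3 k0 k1 k2 hne01 hne02 hne12
      linarith
  by_cases hbad : μ 0 + μ 1 + μ 2 ≤ 2*d - m 0
  · exact Or.inl ⟨hμmono, hμ_le 0, hμ_nonneg 9, hbad⟩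
  · right
    push_neg at hbad
    have hSub' : μ 0 + μ 1 + μ 2 ≤ (d - m 0) + m 1 + m 2 := by
      rcases hSub with h | h
      · linarith
      · exact h
    have hSeq : μ 0 + μ 1 + μ 2 = (d - m 0) + m 1 + m 2 := le_antisymm hSub' hSlb
    have hd12 : d < m 1 + m 2 := by linarith
    have ham2 : d - m 0 < m 2 := by linarith
    have hm3a : m 3 ≤ d - m 0 := by
      have h := hμ3 (τ.symm 2) (τ.symm 3) (τ.symm 4)
        (hsymm_ne (by decide)) (hsymm_ne (by decide)) (hsymm_ne (by decide))
      rw [← hvμ 2, ← hvμ 3, ← hvμ 4, ev2, ev3, ev4] at h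
      linarith
    have hvle1 : ∀ i, restMult d m i ≤ m 1 := by
      intro i
      rcases v_cases d m i with ⟨h, _⟩ | ⟨p, h, _, kp⟩ <;> rw [h]
      · linarith
      · exact hml1 p kp
    have hvle2 : ∀ i : Fin 10, (i:ℕ) ≠ 2 → restMult d m i ≤ m 2 := by
      intro i hi
      rcases v_cases d m i with ⟨h, _⟩ | ⟨p, h, gp, kp⟩ <;> rw [h]
      · linarith
      · exact hml2 p (by omega)
    have hvle3 : ∀ i : Fin 10, (i:ℕ) ≠ 2 → (i:ℕ) ≠ 3 → restMult d m i ≤ d - m 0 := by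
      intro i hi hi'
      rcases v_cases d m i with ⟨h, _⟩ | ⟨p, h, gp, kp⟩
      · rw [h]
      · rw [h]; linarith [hml3 p (by omega)]
    have hμ0ub : μ 0 ≤ m 1 := by rw [hμv 0]; exact hvle1 (τ 0)
    have hμ1ub : μ 1 ≤ m 2 := by
      by_cases h : ((τ 1 : Fin 10) : ℕ) = 2
      · have h0 : ((τ 0 : Fin 10) : ℕ) ≠ 2 := by omega
        have h1 : μ 0 ≤ m 2 := by rw [hμv 0]; exact hvle2 _ h0
        have h2 : μ 1 ≤ μ 0 := hμmono (by decide)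
        linarith
      · rw [hμv 1]; exact hvle2 _ h
    have hμ2ub : μ 2 ≤ d - m 0 := by
      by_cases h2 : ((τ 2 : Fin 10) : ℕ) = 2 ∨ ((τ 2 : Fin 10) : ℕ) = 3
      · by_cases h0 : ((τ 0 : Fin 10) : ℕ) = 2 ∨ ((τ 0 : Fin 10) : ℕ) = 3
        · have h1 : ¬(((τ 1 : Fin 10) : ℕ) = 2 ∨ ((τ 1 : Fin 10) : ℕ) = 3) := by omega
          push_neg at h1
          have hb : μ 1 ≤ d - m 0 := by rw [hμv 1]; exact hvle3 _ h1.1 h1.2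
          have hc : μ 2 ≤ μ 1 := hμmono (by decide)
          linarith
        · push_neg at h0
          have hb : μ 0 ≤ d - m 0 := by rw [hμv 0]; exact hvle3 _ h0.1 h0.2
          have hc : μ 2 ≤ μ 0 := hμmono (by decide)
          linarith
      · push_neg at h2
        rw [hμv 2]; exact hvle3 _ h2.1 h2.2
    have hμ0lb : m 1 ≤ μ 0 := by have h := hμ0ge 2; rwa [ev2] at h
    have hμ1lb : m 2 ≤ μ 1 := by linarith
    have hμ2lb : d - m 0 ≤ μ 2 := by linarith
    set t : ℤ := 2 * d - m 0 - μ 0 - μ 1 - μ 2 with ht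
    have htval : t = d - m 1 - m 2 := by rw [ht]; linarith
    set f : Fin 10 → ℤ :=
      fun j : Fin 10 => if (j : ℕ) ≤ 2 then μ j + t else μ j with hfdef
    have hfval : ∀ j : Fin 10, f j = if (j : ℕ) ≤ 2 then μ j + t else μ j :=
      fun j => by rw [hfdef]
    have hfB0 : ∀ j : Fin 10, 0 ≤ (j:ℕ) → f j ≤ d - m 2 := by
      intro j _
      rw [hfval j]; split_ifs with hj
      · linarith [hμmono (Fin.zero_le j), hμ0ub]
      · linarith [hμle2 j (by omega), hμ2ub]
    have hfB1 : ∀ j : Fin 10, 0+1 ≤ (j:ℕ) → f j ≤ d - m 1 := by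
      intro j hj
      rw [hfval j]; split_ifs with hj'
      · linarith [hμle1 j hj, hμ1ub]
      · linarith [hμle2 j (by omega), hμ2ub]
    have hfB2 : ∀ j : Fin 10, 0+2 ≤ (j:ℕ) → f j ≤ d - m 0 := by
      intro j hj
      rw [hfval j]; split_ifs with hj'
      · linarith [hμle2 j hj, hμ2ub]
      · linarith [hμle2 j (by omega), hμ2ub]
    have hf0 : ∀ j : Fin 10, 0 ≤ f j := by
      intro j
      rw [hfval j]; split_ifs with hj
      · have h1 : μ 2 ≤ μ j := hμmono (Fin.le_def.mpr (by rw [c2]; exact hj))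
        linarith [hpos 3]
      · exact hμ_nonneg j
    set σ : Equiv.Perm (Fin 10) := Tuple.sort (fun j => -(f j)) with hσ
    have hmon : Monotone ((fun j => -(f j)) ∘ σ) := Tuple.monotone_sort _
    have hant : Antitone (f ∘ σ) := by
      intro a b hab
      have h := hmon hab
      simp only [Function.comp_apply] at h ⊢
      linarith
    have hσ01 : σ 0 ≠ σ 1 := fun h => absurd (σ.injective h) (by decide)
    have hσ02 : σ 0 ≠ σ 2 := fun h => absurd (σ.injective h) (by decide)
    have hσ12 : σ 1 ≠ σ 2 := fun h => absurd (σ.injective h) (by decide)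
    have hA : (f ∘ σ) 0 ≤ 2 * d - m 0 + t := by
      have h := hfB0 (σ 0) (Nat.zero_le _)
      simp only [Function.comp_apply]
      linarith
    have hB : 0 ≤ (f ∘ σ) 9 := hf0 (σ 9)
    have hC : (f ∘ σ) 0 + (f ∘ σ) 1 + (f ∘ σ) 2 ≤ 2 * d - m 0 + t := by
      have h := sum3_le (s := 0) hfB0 hfB1 hfB2 (Nat.zero_le _) (Nat.zero_le _)
        (Nat.zero_le _) hσ01 hσ02 hσ12
      simp only [Function.comp_apply]
      linarith
    exact ⟨σ, hant, hA, hB, hC⟩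
end
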